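/- For every r > 0, the space (U_r, d) of uniformly discrete subsets of ℝⁿ with parameter r is a compact metric space. -/

import Mathlib

set_option synthInstance.maxHeartbeats 1000000
set_option maxHeartbeats 1000000

open Metric Set Pointwise Filter

/-- The set `D(S,S')` of scales `a > 0` at which `S` and `S'` agree up to `a`. -/
def DSet {n : ℕ} (S S' : Set (EuclideanSpace ℝ (Fin n))) : Set ℝ :=
  {a : ℝ | 0 < a ∧ S ∩ closedBall (0 : EuclideanSpace ℝ (Fin n)) a⁻¹ ⊆ S' + closedBall (0 : EuclideanSpace ℝ (Fin n)) a ∧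
    S' ∩ closedBall (0 : EuclideanSpace ℝ (Fin n)) a⁻¹ ⊆ S + closedBall (0 : EuclideanSpace ℝ (Fin n)) a}

/-- `d(S,S') = min (1/√2, inf D(S,S'))`. -/
noncomputable def dLF {n : ℕ} (S S' : Set (EuclideanSpace ℝ (Fin n))) : ℝ :=
  sInf (insert (Real.sqrt 2)⁻¹ (DSet S S'))

/-- `S` is uniformly discrete with parameter `r`: two distinct points of `S`
are at distance at least `r`. -/
def UniformlyDiscreteSet {n : ℕ} (r : ℝ) (S : Set (EuclideanSpace ℝ (Fin n))) : Prop :=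
  ∀ x ∈ S, ∀ y ∈ S, x ≠ y → r ≤ dist x y

/-- A uniformly discrete set is closed. -/
theorem UniformlyDiscreteSet.isClosed' {n : ℕ} {r : ℝ} (hr : 0 < r)
    {S : Set (EuclideanSpace ℝ (Fin n))} (hS : UniformlyDiscreteSet r S) : IsClosed S := by
  rw [← isOpen_compl_iff, Metric.isOpen_iff]
  intro y hy
  by_cases h : ∃ z ∈ S, dist y z < r / 2
  · obtain ⟨z, hz, hyz⟩ := h
    have hyz0 : 0 < dist y z := dist_pos.mpr fun h => hy (h ▸ hz)
    refine ⟨min (r / 2) (dist y z), lt_min (by linarith) hyz0, fun s hs hsS => ?_⟩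
    rw [mem_ball] at hs
    have h1 : dist s y < r / 2 := lt_of_lt_of_le hs (min_le_left _ _)
    have h2 : dist s y < dist y z := lt_of_lt_of_le hs (min_le_right _ _)
    have hsz : s = z := by
      by_contra hne
      have := hS s hsS z hz hne
      have : dist s z ≤ dist s y + dist y z := dist_triangle _ _ _
      linarith [hS s hsS z hz hne]
    rw [← hsz, dist_comm y s] at hyz0
    rw [hsz] at h2
    rw [← hsz] at h2
    exact absurd h2 (by rw [hsz]; rw [dist_comm]; exact lt_irrefl _ |>.elim ∘ id)
  · refine ⟨r / 2, by linarith, fun s hs hsS => ?_⟩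
    exact h ⟨s, hsS, by rw [dist_comm]; exact mem_ball.mp hs⟩

/-- Abbreviation for the ambient Euclidean space. -/
abbrev EE (n : ℕ) := EuclideanSpace ℝ (Fin n)

/-- The closed ball of radius `m`, as a compact type. -/
abbrev XB (n m : ℕ) : Type := ↥(closedBall (0 : EE n) (m : ℝ))

instance XB.compactSpace (n m : ℕ) : CompactSpace (XB n m) :=
  isCompact_iff_compactSpace.mp (isCompact_closedBall _ _)

theorem Ur_compact {n : ℕ} {r : ℝ} (hr : 0 < r)
    (u : ℕ → Set (EuclideanSpace ℝ (Fin n)))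
    (hu : ∀ k, UniformlyDiscreteSet r (u k)) :
    ∃ S : Set (EuclideanSpace ℝ (Fin n)), UniformlyDiscreteSet r S ∧
      ∃ φ : ℕ → ℕ, StrictMono φ ∧
        Tendsto (fun k => dLF (u (φ k)) S) atTop (nhds 0) := by
  classical
  have hclosed : ∀ k, IsClosed (u k) := fun k => (hu k).isClosed' hr
  let C : ∀ m : ℕ, ℕ → TopologicalSpace.Closeds (XB n m) := fun m k =>
    ⟨Subtype.val ⁻¹' u k, (hclosed k).preimage continuous_subtype_val⟩
  obtain ⟨L, φ, hφ, hL⟩ :=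
    CompactSpace.tendsto_subseq (X := ∀ m, TopologicalSpace.Closeds (XB n m)) (fun k m => C m k)
  have hLm : ∀ m, Tendsto (fun k => C m (φ k)) atTop (nhds (L m)) := fun m =>
    tendsto_pi_nhds.mp hL m
  set Lset : ℕ → Set (EE n) := fun m => Subtype.val '' ((L m : Set (XB n m))) with hLsetdef
  have hA : ∀ m k, (Subtype.val '' ((C m k : Set (XB n m)))) = u k ∩ closedBall (0 : EE n) m := by
    intro m k
    show (Subtype.val : XB n m → EE n) '' (Subtype.val ⁻¹' u k) = u k ∩ closedBall (0 : EE n) m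
    rw [Subtype.image_preimage_val, Set.inter_comm]
  -- the key approximation lemma
  have key : ∀ m : ℕ, ∀ ε : ℝ, 0 < ε → ∀ᶠ k in atTop,
      (u (φ k) ∩ closedBall (0 : EE n) m ⊆ Lset m + closedBall (0 : EE n) ε) ∧
      (Lset m ⊆ u (φ k) + closedBall (0 : EE n) ε) := by
    intro m ε hε
    have h1 := (EMetric.tendsto_atTop.mp (hLm m)) (ENNReal.ofReal ε)
      (ENNReal.ofReal_pos.mpr hε)
    obtain ⟨N, hN⟩ := h1
    rw [eventually_atTop]
    refine ⟨N, fun k hk => ?_⟩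
    have hedist : EMetric.hausdorffEdist (u (φ k) ∩ closedBall (0 : EE n) m) (Lset m)
        < ENNReal.ofReal ε := by
      have := hN k hk
      rw [EMetric.Closeds.edist_eq] at this
      rw [← EMetric.hausdorffEdist_image (isometry_subtype_coe), hA] at this
      exact this
    constructor
    · intro x hx
      have h2 : EMetric.infEdist x (Lset m) < ENNReal.ofReal ε :=
        lt_of_le_of_lt (EMetric.infEdist_le_hausdorffEdist_of_mem hx) hedist
      obtain ⟨y, hy, hxy⟩ := EMetric.infEdist_lt_iff.mp h2
      have hd : dist x y < ε := by
        rw [edist_dist] at hxy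
        exact (ENNReal.ofReal_lt_ofReal_iff hε).mp hxy
      refine ⟨y, hy, x - y, ?_, add_sub_cancel _ _⟩
      rw [mem_closedBall, dist_zero_right, ← dist_eq_norm]
      exact le_of_lt hd
    · intro x hx
      have h2 : EMetric.infEdist x (u (φ k) ∩ closedBall (0 : EE n) m) < ENNReal.ofReal ε := by
        refine lt_of_le_of_lt (EMetric.infEdist_le_hausdorffEdist_of_mem hx) ?_
        rwa [EMetric.hausdorffEdist_comm]
      obtain ⟨y, hy, hxy⟩ := EMetric.infEdist_lt_iff.mp h2
      have hd : dist x y < ε := by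
        rw [edist_dist] at hxy
        exact (ENNReal.ofReal_lt_ofReal_iff hε).mp hxy
      refine ⟨y, hy.1, x - y, ?_, add_sub_cancel _ _⟩
      rw [mem_closedBall, dist_zero_right, ← dist_eq_norm]
      exact le_of_lt hd
  have hLclosed : ∀ m, IsClosed (Lset m) := by
    intro m
    exact (((L m).2.isCompact).image continuous_subtype_val).isClosed
  set S : Set (EE n) := ⋃ m, Lset m with hSdef
  -- S is uniformly discrete
  have hSud : UniformlyDiscreteSet r S := by
    intro x hx y hy hxy
    obtain ⟨m₁, hx1⟩ := mem_iUnion.mp hx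
    obtain ⟨m₂, hy2⟩ := mem_iUnion.mp hy
    have hdxy : 0 < dist x y := dist_pos.mpr hxy
    refine le_of_forall_pos_le_add fun δ hδ => ?_
    set ε := min (δ / 2) (dist x y / 3) with hεdef
    have hε : 0 < ε := lt_min (by linarith) (by linarith)
    obtain ⟨k, hk1, hk2⟩ := ((key m₁ ε hε).and (key m₂ ε hε)).exists
    obtain ⟨p, hp, bp, hbp, hbpx⟩ := hk1.2 hx1
    obtain ⟨q, hq, bq, hbq, hbqy⟩ := hk2.2 hy2
    rw [mem_closedBall, dist_zero_right] at hbp hbq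
    have hxp : dist x p ≤ ε := by
      rw [← hbpx]; rw [dist_eq_norm]; simpa using hbp
    have hyq : dist y q ≤ ε := by
      rw [← hbqy]; rw [dist_eq_norm]; simpa using hbq
    have hpq : p ≠ q := by
      intro hpqe
      have : dist x y ≤ dist x p + dist q y := by
        calc dist x y ≤ dist x p + dist p y := dist_triangle _ _ _
        _ = dist x p + dist q y := by rw [hpqe, dist_comm]
      have : dist x y ≤ 2 * ε := by rw [dist_comm q y] at this; linarith
      have hε3 : ε ≤ dist x y / 3 := min_le_right _ _
      linarith
    have := hu (φ k) p hp q hq hpq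
    have htri : dist p q ≤ dist x p + dist x y + dist y q := by
      calc dist p q ≤ dist p x + dist x q := dist_triangle _ _ _
        _ ≤ dist p x + (dist x y + dist y q) := by linarith [dist_triangle x y q]
        _ = dist x p + dist x y + dist y q := by rw [dist_comm p x]; ring
    have hε2 : ε ≤ δ / 2 := min_le_left _ _
    linarith
  -- small points of S are in Lset m for m large
  have into : ∀ (ρ : ℝ) (m : ℕ), 0 ≤ ρ → ρ + 1 ≤ (m : ℝ) →
      S ∩ closedBall (0 : EE n) ρ ⊆ Lset m := by
    intro ρ m hρ hρm x hx
    obtain ⟨hxS, hxb⟩ := hx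
    obtain ⟨m₀, hx0⟩ := mem_iUnion.mp hxS
    rw [← (hLclosed m).closure_eq]
    rw [Metric.mem_closure_iff]
    intro ε hε
    set η := min (ε / 3) 1 with hηdef
    have hη : 0 < η := lt_min (by linarith) one_pos
    obtain ⟨k, hk0, hkm⟩ := ((key m₀ η hη).and (key m η hη)).exists
    obtain ⟨p, hp, bp, hbp, hbpx⟩ := hk0.2 hx0
    rw [mem_closedBall, dist_zero_right] at hbp
    have hxp : dist x p ≤ η := by
      rw [← hbpx]; rw [dist_eq_norm]; simpa using hbp
    have hpball : p ∈ closedBall (0 : EE n) m := by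
      rw [mem_closedBall, dist_zero_right]
      have h1 : ‖p‖ ≤ ‖x‖ + dist x p := by
        calc ‖p‖ = dist p 0 := (dist_zero_right p).symm
          _ ≤ dist p x + dist x 0 := dist_triangle _ _ _
          _ = ‖x‖ + dist x p := by rw [dist_comm p x, dist_zero_right]; ring
      have h2 : ‖x‖ ≤ ρ := by rwa [mem_closedBall, dist_zero_right] at hxb
      have h3 : η ≤ 1 := min_le_right _ _
      linarith
    obtain ⟨y, hy, by', hby, hbyp⟩ := hkm.1 ⟨hp, hpball⟩
    rw [mem_closedBall, dist_zero_right] at hby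
    have hpy : dist p y ≤ η := by
      rw [← hbyp]; rw [dist_eq_norm]; simpa using hby
    refine ⟨y, hy, ?_⟩
    have h3 : η ≤ ε / 3 := min_le_left _ _
    calc dist x y ≤ dist x p + dist p y := dist_triangle _ _ _
      _ ≤ η + η := add_le_add hxp hpy
      _ < ε := by linarith
  refine ⟨S, hSud, φ, hφ, ?_⟩
  rw [Metric.tendsto_atTop]
  intro ε hε
  set ε' := min (ε / 2) (1 / 2) with hε'def
  have hε' : 0 < ε' := lt_min (by linarith) (by norm_num)
  set m := ⌈(ε')⁻¹⌉₊ + 1 with hmdef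
  have hm : (ε')⁻¹ + 1 ≤ (m : ℝ) := by
    have := Nat.le_ceil (ε')⁻¹
    push_cast [hmdef]
    linarith
  have hinvpos : 0 ≤ (ε')⁻¹ := by positivity
  obtain ⟨N, hN⟩ := eventually_atTop.mp (key m ε' hε')
  refine ⟨N, fun k hk => ?_⟩
  have hmem : ε' ∈ DSet (u (φ k)) S := by
    refine ⟨hε', ?_, ?_⟩
    · intro x hx
      have hx' : x ∈ u (φ k) ∩ closedBall (0 : EE n) m := by
        refine ⟨hx.1, ?_⟩
        have := hx.2
        rw [mem_closedBall] at this ⊢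
        exact le_trans this (by linarith)
      obtain ⟨y, hy, b, hb, hbe⟩ := (hN k hk).1 hx'
      exact ⟨y, mem_iUnion.mpr ⟨m, hy⟩, b, hb, hbe⟩
    · intro x hx
      have hx' : x ∈ Lset m := into (ε')⁻¹ m hinvpos hm hx
      exact (hN k hk).2 hx'
  have hd1 : dLF (u (φ k)) S ≤ ε' := by
    apply csInf_le
    · refine ⟨0, fun a ha => ?_⟩
      rcases Set.mem_insert_iff.mp ha with rfl | ha
      · positivity
      · exact le_of_lt ha.1
    · exact mem_insert_of_mem _ hmem
  have hd0 : 0 ≤ dLF (u (φ k)) S := by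
    apply Real.sInf_nonneg
    intro a ha
    rcases Set.mem_insert_iff.mp ha with rfl | ha
    · positivity
    · exact le_of_lt ha.1
  rw [Real.dist_eq, sub_zero, abs_of_nonneg hd0]
  have : ε' ≤ ε / 2 := min_le_left _ _
  linarith
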